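/- Let A and B be symmetric n×n matrices with A positive semi-definite, B ∈ Γ_k^+, and A + B ∈ Γ_k^+. Then σ_k(A + B) ≥ σ_k(B). If instead A is negative semi-definite (with the same other hypotheses), then σ_k(A + B) ≤ σ_k(B). -/

import Mathlib

open Finset Matrix

/-- The `k`-th elementary symmetric function of a vector in `ℝⁿ`. -/
noncomputable def esymmVec (n k : ℕ) (x : Fin n → ℝ) : ℝ :=
  ∑ s ∈ Finset.univ.powersetCard k, ∏ i ∈ s, x i

/-- `σ_k(A)`: the `k`-th elementary symmetric function of the eigenvalues of a
symmetric (Hermitian) real matrix `A`. -/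
noncomputable def sigmaM (n k : ℕ) (A : Matrix (Fin n) (Fin n) ℝ) : ℝ :=
  if h : A.IsHermitian then esymmVec n k h.eigenvalues else 0

/-- The `q`-th Newton transformation
`T_q(A) = σ_q(A)·I − σ_{q−1}(A)·A + ⋯ + (−1)^q A^q`. -/
noncomputable def newtonT (n q : ℕ) (A : Matrix (Fin n) (Fin n) ℝ) :
    Matrix (Fin n) (Fin n) ℝ :=
  ∑ j ∈ Finset.range (q + 1), ((-1 : ℝ) ^ j * sigmaM n (q - j) A) • A ^ j

/-- The Gårding cone `Γ_k^+`: the connected component of `{σ_k > 0}` in `ℝⁿ`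
containing the positive cone (represented by the point `(1,…,1)`). -/
noncomputable def GammaPlus (n k : ℕ) : Set (Fin n → ℝ) :=
  connectedComponentIn {x | 0 < esymmVec n k x} (fun _ => 1)

/-- A symmetric matrix lies in `Γ_k^+` if its eigenvalue vector does. -/
def InGammaPlus (n k : ℕ) (A : Matrix (Fin n) (Fin n) ℝ) : Prop :=
  ∃ h : A.IsHermitian, h.eigenvalues ∈ GammaPlus n k

namespace SigmaAux
open Polynomial Module

/-- esymm of a multiset of nonnegative reals is nonnegative. -/
lemma esymm_nonneg {s : Multiset ℝ} (h : ∀ a ∈ s, 0 ≤ a) (j : ℕ) : 0 ≤ s.esymm j := by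
  refine Multiset.sum_nonneg ?_
  intro b hb
  obtain ⟨t, ht, rfl⟩ := Multiset.mem_map.1 hb
  exact Multiset.prod_nonneg fun a ha => h a (Multiset.mem_of_le (Multiset.mem_powersetCard.1 ht).1 ha)

lemma multiset_sum_pos {s : Multiset ℝ} (h : ∀ a ∈ s, 0 < a) (hs : s ≠ 0) : 0 < s.sum := by
  obtain ⟨a, ha⟩ := Multiset.exists_mem_of_ne_zero hs
  have : a ::ₘ s.erase a = s := Multiset.cons_erase ha
  rw [← this, Multiset.sum_cons]
  have h1 : 0 ≤ (s.erase a).sum :=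
    Multiset.sum_nonneg fun x hx => (h x (Multiset.mem_of_mem_erase hx)).le
  linarith [h a ha]

lemma esymm_pos {s : Multiset ℝ} (h : ∀ a ∈ s, 0 < a) {j : ℕ} (hj : j ≤ Multiset.card s) :
    0 < s.esymm j := by
  have hpos : ∀ b ∈ (s.powersetCard j).map Multiset.prod, 0 < b := by
    intro b hb
    obtain ⟨t, ht, rfl⟩ := Multiset.mem_map.1 hb
    exact Multiset.prod_pos fun a ha => h a (Multiset.mem_of_le (Multiset.mem_powersetCard.1 ht).1 ha)
  have hne : (s.powersetCard j).map Multiset.prod ≠ 0 := by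
    rw [Ne, Multiset.map_eq_zero]
    intro h0
    have := Multiset.card_powersetCard j s
    rw [h0] at this
    simp only [Multiset.card_zero] at this
    exact absurd this.symm (Nat.choose_pos hj).ne'
  exact multiset_sum_pos hpos hne

lemma esymm_zero' (s : Multiset ℝ) : s.esymm 0 = 1 := by
  simp [Multiset.esymm, Multiset.powersetCard_zero_left]

lemma esymm_cons (a : ℝ) (s : Multiset ℝ) (j : ℕ) :
    (a ::ₘ s).esymm (j + 1) = s.esymm (j + 1) + a * s.esymm j := by
  simp only [Multiset.esymm, Multiset.powersetCard_cons, Multiset.map_add, Multiset.sum_add,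
    Multiset.map_map]
  congr 1
  rw [← Multiset.sum_map_mul_left]
  refine congrArg _ (Multiset.map_congr rfl fun t _ => ?_)
  simp [Multiset.prod_cons]

/-- The derivative of a real polynomial that splits also splits. -/
lemma splits_derivative {p : ℝ[X]} (hp : p.Splits) :
    (derivative p).Splits := by
  by_cases hd : derivative p = 0
  · rw [hd]; exact Splits.zero
  have h1 : Multiset.card p.roots = p.natDegree := (splits_iff_card_roots).1 hp
  have h2 : Multiset.card p.roots ≤ Multiset.card (derivative p).roots + 1 :=
    card_roots_le_derivative p
  have h3 : (derivative p).natDegree ≤ p.natDegree - 1 := natDegree_derivative_le p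
  have h4 : Multiset.card (derivative p).roots ≤ (derivative p).natDegree :=
    (derivative p).card_roots'
  refine (splits_iff_card_roots).2 (le_antisymm h4 ?_)
  omega

lemma splits_iterate_derivative {p : ℝ[X]} (hp : p.Splits) (m : ℕ) :
    (derivative^[m] p).Splits := by
  induction m with
  | zero => exact hp
  | succ m ih => rw [Function.iterate_succ_apply']; exact splits_derivative ih

/-- positivity of a product of (X - r) and of its derivative evaluated beyond the roots -/
lemma eval_prod_X_sub_C_pos {s : Multiset ℝ} {b : ℝ} (h : ∀ r ∈ s, r < b) :
    0 < eval b (s.map fun r => X - C r).prod ∧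
      0 ≤ eval b (derivative (s.map fun r => X - C r).prod) := by
  induction s using Multiset.induction with
  | empty => simp
  | cons a t ih =>
    have hat : ∀ r ∈ t, r < b := fun r hr => h r (Multiset.mem_cons_of_mem hr)
    obtain ⟨h1, h2⟩ := ih hat
    have hab : 0 < b - a := sub_pos.2 (h a (Multiset.mem_cons_self a t))
    rw [Multiset.map_cons, Multiset.prod_cons]
    constructor
    · rw [eval_mul, eval_sub, eval_X, eval_C]
      positivity
    · rw [derivative_mul, eval_add, eval_mul, eval_mul, eval_sub, eval_X, eval_C]
      have : derivative (X - C a) = 1 := by simp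
      rw [this, eval_one, one_mul]
      nlinarith

lemma eval_deriv_prod_X_sub_C_pos {s : Multiset ℝ} {b : ℝ} (h : ∀ r ∈ s, r < b) (hs : s ≠ 0) :
    0 < eval b (derivative (s.map fun r => X - C r).prod) := by
  obtain ⟨a, ha⟩ := Multiset.exists_mem_of_ne_zero hs
  have hs' : a ::ₘ s.erase a = s := Multiset.cons_erase ha
  rw [← hs', Multiset.map_cons, Multiset.prod_cons, derivative_mul]
  have hat : ∀ r ∈ s.erase a, r < b := fun r hr => h r (Multiset.mem_of_mem_erase hr)
  obtain ⟨h1, h2⟩ := eval_prod_X_sub_C_pos hat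
  have hab : 0 < b - a := sub_pos.2 (h a ha)
  have : derivative (X - C a) = 1 := by simp
  rw [eval_add, eval_mul, eval_mul, this, eval_one, one_mul, eval_sub, eval_X, eval_C]
  nlinarith

/-- S3: for a split polynomial with positive leading coefficient and positive degree,
whose roots all lie below `b`, the derivative is positive at `b`. -/
lemma eval_derivative_pos_of_roots_lt {p : ℝ[X]} (hp : p.Splits)
    (hlc : 0 < p.leadingCoeff) (hdeg : 0 < p.natDegree) {b : ℝ}
    (hroots : ∀ r ∈ p.roots, r < b) : 0 < eval b (derivative p) := by
  have hp0 : p ≠ 0 := fun h => by simp [h] at hlc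
  have hne : p.roots ≠ 0 := by
    have h1 : Multiset.card p.roots = p.natDegree := (splits_iff_card_roots).1 hp
    intro h0; rw [h0] at h1; simp at h1; omega
  have hprod := hp.eq_prod_roots
  calc 0 < p.leadingCoeff * eval b (derivative (p.roots.map fun r => X - C r).prod) := by
        have := eval_deriv_prod_X_sub_C_pos hroots hne
        positivity
    _ = eval b (derivative p) := by
        conv_rhs => rw [hprod]
        rw [derivative_C_mul, eval_mul, eval_C]

/-- root beyond a point of nonpositive value, for positive leading coefficient -/
lemma exists_root_ge_of_eval_nonpos {p : ℝ[X]} (hlc : 0 < p.leadingCoeff)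
    (hdeg : 0 < p.natDegree) {u : ℝ} (hu : eval u p ≤ 0) :
    ∃ r, u ≤ r ∧ eval r p = 0 := by
  have htop : Filter.Tendsto (fun x => eval x p) Filter.atTop Filter.atTop :=
    p.tendsto_atTop_of_leadingCoeff_nonneg (natDegree_pos_iff_degree_pos.1 hdeg) hlc.le
  obtain ⟨T, hT1, hT2⟩ := ((htop.eventually_ge_atTop 1).and (Filter.eventually_ge_atTop u)).exists
  have hcont : ContinuousOn (fun x => eval x p) (Set.Icc u T) := (p.continuous_aeval).continuousOn
  have h0 : (0:ℝ) ∈ Set.Icc (eval u p) (eval T p) := ⟨hu, by linarith⟩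
  obtain ⟨r, hr, hr0⟩ := intermediate_value_Icc hT2 hcont h0
  exact ⟨r, hr.1, hr0⟩

/-- Leibniz rule for iterated derivative of `(X + C a) * Q`. -/
lemma iterate_derivative_linear_mul (a : ℝ) (Q : ℝ[X]) (m : ℕ) :
    derivative^[m + 1] ((X + C a) * Q) =
      (X + C a) * derivative^[m + 1] Q + C ((m : ℝ) + 1) * derivative^[m] Q := by
  have hX : derivative (X + C a : ℝ[X]) = 1 := by simp
  induction m with
  | zero =>
    rw [Function.iterate_one, Function.iterate_zero_apply, derivative_mul, hX]
    simp only [Nat.cast_zero, zero_add, C_1, one_mul]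
    ring
  | succ m ih =>
    rw [Function.iterate_succ_apply', ih, derivative_add, derivative_mul, derivative_mul,
      derivative_C, zero_mul, zero_add, hX,
      ← Function.iterate_succ_apply' derivative (m + 1) Q,
      ← Function.iterate_succ_apply' derivative m Q]
    have hC : (C ((m:ℝ) + 1 + 1) : ℝ[X]) = C ((m:ℝ) + 1) + 1 := by rw [C_add, C_1]
    push_cast
    rw [hC]
    ring

/-- Notation: the monic polynomial with roots `-r` for `r ∈ s`. -/
noncomputable def prodP (s : Multiset ℝ) : ℝ[X] := (s.map fun r => X + C r).prod

lemma prodP_monic (s : Multiset ℝ) : (prodP s).Monic :=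
  monic_multiset_prod_of_monic s _ fun r _ => monic_X_add_C r

lemma prodP_natDegree (s : Multiset ℝ) : (prodP s).natDegree = Multiset.card s := by
  rw [prodP, natDegree_multiset_prod_of_monic]
  · simp [Multiset.map_map, Function.comp_def]
  · intro p hp
    obtain ⟨r, _, rfl⟩ := Multiset.mem_map.1 hp
    exact monic_X_add_C r


lemma prodP_cons' (a : ℝ) (s : Multiset ℝ) : prodP (a ::ₘ s) = (X + C a) * prodP s := by
  rw [prodP, Multiset.map_cons, Multiset.prod_cons, prodP]

lemma prodP_splits (s : Multiset ℝ) : (prodP s).Splits := by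
  induction s using Multiset.induction with
  | empty => simpa [prodP] using Splits.one
  | cons a t ih =>
    rw [prodP_cons']
    exact Splits.mul (Splits.of_natDegree_le_one (le_of_eq (natDegree_X_add_C a))) ih

lemma prodP_coeff (s : Multiset ℝ) {j : ℕ} (hj : j ≤ Multiset.card s) :
    (prodP s).coeff j = s.esymm (Multiset.card s - j) :=
  Multiset.prod_X_add_C_coeff s hj

abbrev prodP_cons := @prodP_cons'

/-- coefficient of iterated derivative, real version -/
lemma coeff_iterate_derivative_real (p : ℝ[X]) (m j : ℕ) :
    (derivative^[m] p).coeff j = ((j + m).descFactorial m : ℝ) * p.coeff (j + m) := by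
  rw [Polynomial.coeff_iterate_derivative, nsmul_eq_mul]

lemma natDegree_iterate_derivative_prodP (s : Multiset ℝ) {m : ℕ} (hm : m ≤ Multiset.card s) :
    (derivative^[m] (prodP s)).natDegree = Multiset.card s - m ∧
      0 < (derivative^[m] (prodP s)).coeff (Multiset.card s - m) := by
  have hc : (derivative^[m] (prodP s)).coeff (Multiset.card s - m)
      = ((Multiset.card s - m + m).descFactorial m : ℝ) * (prodP s).coeff (Multiset.card s - m + m) := by
    rw [coeff_iterate_derivative_real]
  have harith : Multiset.card s - m + m = Multiset.card s := Nat.sub_add_cancel hm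
  rw [harith] at hc
  have hmono : (prodP s).coeff (Multiset.card s) = 1 := by
    have := (prodP_monic s).leadingCoeff
    rwa [leadingCoeff, prodP_natDegree] at this
  have hpos : 0 < (derivative^[m] (prodP s)).coeff (Multiset.card s - m) := by
    rw [hc, hmono, mul_one]
    have hne : (Multiset.card s).descFactorial m ≠ 0 := by
      rw [Ne, Nat.descFactorial_eq_zero_iff_lt]; omega
    exact_mod_cast Nat.pos_of_ne_zero hne
  refine ⟨le_antisymm ?_ (le_natDegree_of_ne_zero hpos.ne'), hpos⟩
  calc (derivative^[m] (prodP s)).natDegree ≤ (prodP s).natDegree - m :=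
        natDegree_iterate_derivative _ _
    _ = Multiset.card s - m := by rw [prodP_natDegree]

lemma leadingCoeff_iterate_derivative_prodP (s : Multiset ℝ) {m : ℕ} (hm : m ≤ Multiset.card s) :
    0 < (derivative^[m] (prodP s)).leadingCoeff := by
  obtain ⟨h1, h2⟩ := natDegree_iterate_derivative_prodP s hm
  rwa [leadingCoeff, h1]

/-- Core lemma: removing a linear factor preserves positivity of the m-th derivative
on the positive ray. -/
lemma step_pos (t : Multiset ℝ) (a : ℝ) {m : ℕ} (hm : m ≤ Multiset.card t)
    (hP : ∀ u : ℝ, 0 < u → 0 < eval u (derivative^[m] (prodP (a ::ₘ t)))) :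
    ∀ u : ℝ, 0 < u → 0 < eval u (derivative^[m] (prodP t)) := by
  by_contra hcon
  push_neg at hcon
  obtain ⟨u0, hu0, hval⟩ := hcon
  set q := derivative^[m] (prodP t) with hq
  obtain ⟨hqdeg, -⟩ := natDegree_iterate_derivative_prodP t hm
  have hqlc : 0 < q.leadingCoeff := leadingCoeff_iterate_derivative_prodP t hm
  have hq0 : q ≠ 0 := fun h => by simp [h] at hqlc
  -- degenerate case: q is a positive constant
  rcases Nat.eq_zero_or_pos q.natDegree with hdeg0 | hdegpos
  · have : q = C (q.coeff 0) := eq_C_of_natDegree_eq_zero hdeg0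
    rw [this] at hval
    simp only [eval_C] at hval
    have : q.leadingCoeff = q.coeff 0 := by rw [leadingCoeff, hdeg0]
    rw [this] at hqlc
    linarith
  -- find a root ≥ u0
  obtain ⟨r, hr1, hr2⟩ := exists_root_ge_of_eval_nonpos hqlc hdegpos hval
  have hrroot : r ∈ q.roots := by rw [mem_roots hq0]; exact hr2
  have hroots_ne : q.roots.toFinset.Nonempty := ⟨r, Multiset.mem_toFinset.2 hrroot⟩
  set β := q.roots.toFinset.max' hroots_ne with hβ
  have hβmem : β ∈ q.roots := Multiset.mem_toFinset.1 (q.roots.toFinset.max'_mem hroots_ne)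
  have hβroot : eval β q = 0 := (mem_roots hq0).1 hβmem
  have hβmax : ∀ ρ ∈ q.roots, ρ ≤ β := fun ρ hρ =>
    q.roots.toFinset.le_max' ρ (Multiset.mem_toFinset.2 hρ)
  have hβpos : 0 < β := lt_of_lt_of_le hu0 (le_trans hr1 (hβmax r hrroot))
  -- q > 0 strictly beyond β
  have hq_beyond : ∀ v, β < v → 0 < eval v q := by
    intro v hv
    by_contra hle
    push_neg at hle
    obtain ⟨r', hr'1, hr'2⟩ := exists_root_ge_of_eval_nonpos hqlc hdegpos hle
    have : r' ∈ q.roots := by rw [mem_roots hq0]; exact hr'2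
    have := hβmax r' this
    linarith
  -- use the hypothesis at β
  rcases Nat.eq_zero_or_pos m with hm0 | hmpos
  · -- m = 0 : immediate contradiction
    subst hm0
    have hcontr := hP β hβpos
    rw [Function.iterate_zero_apply, prodP_cons', eval_mul] at hcontr
    rw [hq, Function.iterate_zero_apply] at hβroot
    rw [hβroot, mul_zero] at hcontr
    exact lt_irrefl _ hcontr
  · obtain ⟨m', rfl⟩ : ∃ m', m = m' + 1 := ⟨m - 1, by omega⟩
    have hleib := iterate_derivative_linear_mul a (prodP t) m'
    have hPβ := hP β hβpos
    rw [prodP_cons', hleib, eval_add, eval_mul, eval_mul, eval_C, ← hq, hβroot, mul_zero,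
      zero_add] at hPβ
    have hRpos : 0 < eval β (derivative^[m'] (prodP t)) := by
      by_contra hnn
      push_neg at hnn
      nlinarith [hPβ]
    set R := derivative^[m'] (prodP t) with hR
    have hRd : derivative R = q := by
      rw [hR, hq]
      exact (Function.iterate_succ_apply' _ m' _).symm
    -- R is positive on [β, ∞)
    have hRmono : StrictMonoOn (fun x => eval x R) (Set.Ici β) := by
      refine strictMonoOn_of_deriv_pos (convex_Ici β) (R.continuous_aeval.continuousOn) ?_
      intro x hx
      rw [interior_Ici] at hx
      rw [Polynomial.deriv, hRd]
      exact hq_beyond x hx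
    have hRpos' : ∀ v, β ≤ v → 0 < eval v R := by
      intro v hv
      rcases eq_or_lt_of_le hv with rfl | hv'
      · exact hRpos
      · have := hRmono (Set.self_mem_Ici) (Set.mem_Ici.2 hv) hv'
        dsimp at this
        linarith
    have hRroots : ∀ ρ ∈ R.roots, ρ < β := by
      intro ρ hρ
      by_contra hge
      push_neg at hge
      have := hRpos' ρ hge
      have hRne : R ≠ 0 := fun h => by
        have := leadingCoeff_iterate_derivative_prodP t (m := m') (by omega)
        rw [← hR, h] at this; simp at this
      have hev : eval ρ R = 0 := (mem_roots hRne).1 hρ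
      linarith [hRpos' ρ hge]
    have hRsplits : R.Splits := splits_iterate_derivative (prodP_splits t) m'
    have hRlc : 0 < R.leadingCoeff := leadingCoeff_iterate_derivative_prodP t (by omega)
    have hRdeg : 0 < R.natDegree := by
      obtain ⟨h1, -⟩ := natDegree_iterate_derivative_prodP t (m := m') (by omega)
      rw [← hR] at h1
      omega
    have := eval_derivative_pos_of_roots_lt hRsplits hRlc hRdeg hRroots
    rw [hRd, hβroot] at this
    exact lt_irrefl _ this


lemma eq_C_mul_prodP_neg_roots {q : ℝ[X]} (hs : q.Splits) (hq : q ≠ 0) :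
    q = C q.leadingCoeff * prodP (q.roots.map fun ρ => -ρ) ∧
      Multiset.card (q.roots.map fun ρ => -ρ) = q.natDegree := by
  constructor
  · conv_lhs => rw [hs.eq_prod_roots]
    rw [prodP, Multiset.map_map]
    congr 1
    refine congrArg Multiset.prod (Multiset.map_congr rfl fun ρ _ => ?_)
    simp [sub_eq_add_neg]
  · rw [Multiset.card_map]
    exact splits_iff_card_roots.1 hs

lemma coeff_iterD_prodP (s : Multiset ℝ) {m j : ℕ} (hjm : j + m ≤ Multiset.card s) :
    (derivative^[m] (prodP s)).coeff j
      = ((j + m).descFactorial m : ℝ) * s.esymm (Multiset.card s - (j + m)) := by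
  rw [coeff_iterate_derivative_real, prodP_coeff s hjm]

lemma descFactorial_real_pos {j m : ℕ} (h : m ≤ j) : (0:ℝ) < (j.descFactorial m : ℝ) := by
  have hne : j.descFactorial m ≠ 0 := by
    rw [Ne, Nat.descFactorial_eq_zero_iff_lt]; omega
  exact_mod_cast Nat.pos_of_ne_zero hne

lemma pos_eval_of_esymm_nonneg {s : Multiset ℝ} {k : ℕ} (hk1 : 1 ≤ k)
    (hk2 : k ≤ Multiset.card s) (h : ∀ j, 1 ≤ j → j ≤ k → 0 ≤ s.esymm j) :
    ∀ u : ℝ, 0 < u → 0 < eval u (derivative^[Multiset.card s - k] (prodP s)) := by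
  intro u hu
  obtain ⟨hdeg, hlcpos⟩ := natDegree_iterate_derivative_prodP s
    (m := Multiset.card s - k) (by omega)
  set q := derivative^[Multiset.card s - k] (prodP s) with hqdef
  set m := Multiset.card s - k with hm
  have hdegk : q.natDegree = k := by rw [hdeg]; omega
  have hcoeff : ∀ j, j ≤ k → 0 ≤ q.coeff j := by
    intro j hj
    have hjm : j + m ≤ Multiset.card s := by omega
    rw [hqdef, coeff_iterD_prodP s hjm]
    have harith : Multiset.card s - (j + m) = k - j := by omega
    rw [harith]
    have hd := descFactorial_real_pos (le_add_self : m ≤ j + m)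
    rcases Nat.eq_zero_or_pos (k - j) with h0 | hpos
    · rw [h0, esymm_zero']; positivity
    · have := h (k - j) hpos (by omega)
      positivity
  have hcoeffk : 0 < q.coeff k := by
    rw [show k = Multiset.card s - m by omega]
    exact hlcpos
  rw [eval_eq_sum_range, hdegk]
  refine Finset.sum_pos' ?_ ⟨k, Finset.self_mem_range_succ k, by positivity⟩
  intro j hj
  have hj' : j ≤ k := Nat.lt_succ_iff.1 (Finset.mem_range.1 hj)
  have := hcoeff j hj'
  positivity

lemma esymm_nonneg_of_eval_pos {t : Multiset ℝ} {m : ℕ} (hm : m ≤ Multiset.card t)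
    (h : ∀ u : ℝ, 0 < u → 0 < eval u (derivative^[m] (prodP t))) :
    ∀ j, j ≤ Multiset.card t - m → 0 ≤ t.esymm j := by
  intro j0 hj0
  obtain ⟨hdeg, hlcpos⟩ := natDegree_iterate_derivative_prodP t hm
  have hlc := leadingCoeff_iterate_derivative_prodP t hm
  have hsplits : (derivative^[m] (prodP t)).Splits :=
    splits_iterate_derivative (prodP_splits t) m
  set q := derivative^[m] (prodP t) with hqdef
  have hq0 : q ≠ 0 := fun hz => by rw [hz] at hlc; simp at hlc
  have hroots : ∀ ρ ∈ q.roots, ρ ≤ 0 := by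
    intro ρ hρ
    by_contra hgt
    push_neg at hgt
    have hev : eval ρ q = 0 := (mem_roots hq0).1 hρ
    linarith [h ρ hgt]
  obtain ⟨hfact, hcard⟩ := eq_C_mul_prodP_neg_roots hsplits hq0
  set j := (Multiset.card t - m) - j0 with hj
  have hjq : 0 ≤ q.coeff j := by
    rw [hfact, coeff_C_mul]
    have hcard' : Multiset.card (q.roots.map fun ρ => -ρ) = Multiset.card t - m := by
      rw [hcard, hdeg]
    have hjle : j ≤ Multiset.card (q.roots.map fun ρ => -ρ) := by omega
    rw [prodP_coeff _ hjle]
    refine mul_nonneg hlc.le (esymm_nonneg ?_ _)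
    intro b hb
    obtain ⟨ρ, hρ, rfl⟩ := Multiset.mem_map.1 hb
    linarith [hroots ρ hρ]
  have hjm : j + m ≤ Multiset.card t := by omega
  rw [hqdef, coeff_iterD_prodP t hjm] at hjq
  have harith : Multiset.card t - (j + m) = j0 := by omega
  rw [harith] at hjq
  have hd := descFactorial_real_pos (le_add_self : m ≤ j + m)
  nlinarith

/-- Deletion lemma. -/
lemma esymm_delete {a : ℝ} {t : Multiset ℝ} {k : ℕ} (hk1 : 1 ≤ k)
    (hk2 : k ≤ Multiset.card t + 1)
    (h : ∀ j, 1 ≤ j → j ≤ k → 0 ≤ (a ::ₘ t).esymm j) :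
    ∀ j, 1 ≤ j → j ≤ k - 1 → 0 ≤ t.esymm j := by
  have hcards : Multiset.card (a ::ₘ t) = Multiset.card t + 1 := Multiset.card_cons a t
  have hstep1 : ∀ u : ℝ, 0 < u →
      0 < eval u (derivative^[Multiset.card t + 1 - k] (prodP (a ::ₘ t))) := by
    have := pos_eval_of_esymm_nonneg hk1 (by omega : k ≤ Multiset.card (a ::ₘ t)) h
    rwa [hcards] at this
  have hstep2 := step_pos t a (m := Multiset.card t + 1 - k) (by omega) hstep1
  have hstep3 := esymm_nonneg_of_eval_pos (t := t) (m := Multiset.card t + 1 - k)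
    (by omega) hstep2
  intro j hj1 hj2
  exact hstep3 j (by omega)

/-- Strict positivity from nonnegativity plus positivity of the top function. -/
lemma esymm_all_pos {s : Multiset ℝ} {k : ℕ} (hk1 : 1 ≤ k) (hk2 : k ≤ Multiset.card s)
    (h0 : 0 < s.esymm k) (hnn : ∀ j, 1 ≤ j → j ≤ k → 0 ≤ s.esymm j) :
    ∀ j, 1 ≤ j → j ≤ k → 0 < s.esymm j := by
  obtain ⟨hdeg, hlcpos⟩ := natDegree_iterate_derivative_prodP s
    (m := Multiset.card s - k) (by omega)
  have hlc := leadingCoeff_iterate_derivative_prodP s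
    (m := Multiset.card s - k) (by omega)
  have hsplits : (derivative^[Multiset.card s - k] (prodP s)).Splits :=
    splits_iterate_derivative (prodP_splits s) _
  set q := derivative^[Multiset.card s - k] (prodP s) with hqdef
  set m := Multiset.card s - k with hm
  have hq0 : q ≠ 0 := fun hz => by rw [hz] at hlc; simp at hlc
  have hdegk : q.natDegree = k := by rw [hdeg]; omega
  have hcoeff0 : 0 < q.coeff 0 := by
    rw [hqdef, coeff_iterD_prodP s (by omega : 0 + m ≤ Multiset.card s)]
    have harith : Multiset.card s - (0 + m) = k := by omega
    rw [harith]
    have hd := descFactorial_real_pos (le_add_self : m ≤ 0 + m)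
    positivity
  have hcoeff : ∀ j, j ≤ k → 0 ≤ q.coeff j := by
    intro j hj
    have hjm : j + m ≤ Multiset.card s := by omega
    rw [hqdef, coeff_iterD_prodP s hjm]
    have harith : Multiset.card s - (j + m) = k - j := by omega
    rw [harith]
    have hd := descFactorial_real_pos (le_add_self : m ≤ j + m)
    rcases Nat.eq_zero_or_pos (k - j) with hz | hpos
    · rw [hz, esymm_zero']; positivity
    · have := hnn (k - j) hpos (by omega)
      positivity
  have heval : ∀ u : ℝ, 0 ≤ u → 0 < eval u q := by
    intro u hu
    rw [eval_eq_sum_range, hdegk]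
    refine Finset.sum_pos' ?_ ⟨0, by simp, by simpa using hcoeff0⟩
    intro j hj
    have := hcoeff j (Nat.lt_succ_iff.1 (Finset.mem_range.1 hj))
    positivity
  have hroots : ∀ ρ ∈ q.roots, ρ < 0 := by
    intro ρ hρ
    by_contra hge
    push_neg at hge
    have hev : eval ρ q = 0 := (mem_roots hq0).1 hρ
    linarith [heval ρ hge]
  obtain ⟨hfact, hcard⟩ := eq_C_mul_prodP_neg_roots hsplits hq0
  intro j0 hj01 hj0k
  set j := k - j0 with hj
  have hjq : 0 < q.coeff j := by
    rw [hfact, coeff_C_mul]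
    have hcard' : Multiset.card (q.roots.map fun ρ => -ρ) = k := by rw [hcard, hdegk]
    have hjle : j ≤ Multiset.card (q.roots.map fun ρ => -ρ) := by omega
    rw [prodP_coeff _ hjle]
    refine mul_pos hlc (esymm_pos ?_ (by omega))
    intro b hb
    obtain ⟨ρ, hρ, rfl⟩ := Multiset.mem_map.1 hb
    linarith [hroots ρ hρ]
  have hjm : j + m ≤ Multiset.card s := by omega
  rw [hqdef, coeff_iterD_prodP s hjm] at hjq
  have harith : Multiset.card s - (j + m) = j0 := by omega
  rw [harith] at hjq
  have hd := descFactorial_real_pos (le_add_self : m ≤ j + m)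
  nlinarith


section VecLayer

variable {n k : ℕ}

lemma esymmVec_eq_esymm (n k : ℕ) (x : Fin n → ℝ) :
    esymmVec n k x = (Multiset.map x Finset.univ.val).esymm k :=
  (Finset.esymm_map_val x Finset.univ k).symm

lemma card_msOf (x : Fin n → ℝ) : Multiset.card (Multiset.map x Finset.univ.val) = n := by
  rw [Multiset.card_map]
  simp

lemma msOf_eq_cons (w : Fin n → ℝ) (i : Fin n) :
    Multiset.map w Finset.univ.val
      = w i ::ₘ Multiset.map w ((Finset.univ.erase i).val) := by
  rw [Finset.erase_val]
  have h1 : Finset.univ.val = i ::ₘ Finset.univ.val.erase i :=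
    (Multiset.cons_erase (by simp : i ∈ Finset.univ.val)).symm
  conv_lhs => rw [h1]
  rw [Multiset.map_cons]

lemma map_erase_update (w : Fin n → ℝ) (i : Fin n) (c : ℝ) :
    Multiset.map (Function.update w i c) ((Finset.univ.erase i).val)
      = Multiset.map w ((Finset.univ.erase i).val) := by
  refine Multiset.map_congr rfl fun j hj => ?_
  have hji : j ≠ i := by
    have : j ∈ Finset.univ.erase i := hj
    exact (Finset.mem_erase.1 this).1
  exact Function.update_of_ne hji c w

/-- single coordinate update step -/
lemma esymmVec_update_step (hk1 : 1 ≤ k) (hkn : k ≤ n) (z : Fin n → ℝ) (i : Fin n) (c : ℝ)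
    (hc : z i ≤ c) (hz : ∀ j, 1 ≤ j → j ≤ k → 0 ≤ esymmVec n j z) :
    (∀ j, 1 ≤ j → j ≤ k → 0 ≤ esymmVec n j (Function.update z i c)) ∧
      esymmVec n k z ≤ esymmVec n k (Function.update z i c) := by
  set t := Multiset.map z ((Finset.univ.erase i).val) with ht
  have hcardt : Multiset.card t = n - 1 := by
    rw [ht, Multiset.card_map, Finset.erase_val, Multiset.card_erase_of_mem (by simp)]
    simp [Nat.pred_eq_sub_one]
  have hconsz : ∀ j, esymmVec n j z = ((z i) ::ₘ t).esymm j := by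
    intro j
    rw [esymmVec_eq_esymm, msOf_eq_cons z i]
  have hconsu : ∀ j, esymmVec n j (Function.update z i c) = (c ::ₘ t).esymm j := by
    intro j
    rw [esymmVec_eq_esymm, msOf_eq_cons (Function.update z i c) i, Function.update_self,
      map_erase_update]
  have hdel : ∀ j, 1 ≤ j → j ≤ k - 1 → 0 ≤ t.esymm j := by
    refine esymm_delete (a := z i) hk1 (by omega) ?_
    intro j hj1 hj2
    rw [← hconsz j]
    exact hz j hj1 hj2
  have hE : ∀ j, j ≤ k - 1 → 0 ≤ t.esymm j := by
    intro j hj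
    rcases Nat.eq_zero_or_pos j with rfl | hpos
    · rw [esymm_zero']; norm_num
    · exact hdel j hpos hj
  constructor
  · intro j hj1 hjk
    obtain ⟨j', rfl⟩ : ∃ j', j = j' + 1 := ⟨j - 1, by omega⟩
    rw [hconsu, esymm_cons]
    have h1 : 0 ≤ esymmVec n (j' + 1) z := hz _ hj1 hjk
    rw [hconsz, esymm_cons] at h1
    have h2 : 0 ≤ t.esymm j' := hE j' (by omega)
    nlinarith
  · obtain ⟨k', rfl⟩ : ∃ k', k = k' + 1 := ⟨k - 1, by omega⟩
    rw [hconsu, hconsz, esymm_cons, esymm_cons]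
    have h2 : 0 ≤ t.esymm k' := hE k' (by omega)
    nlinarith

/-- coordinatewise monotonicity of esymmVec on the closed cone -/
lemma esymmVec_mono (hk1 : 1 ≤ k) (hkn : k ≤ n) {x y : Fin n → ℝ}
    (hx : ∀ j, 1 ≤ j → j ≤ k → 0 ≤ esymmVec n j x) (hxy : ∀ i, x i ≤ y i) :
    esymmVec n k x ≤ esymmVec n k y := by
  have key : ∀ F : Finset (Fin n),
      (∀ j, 1 ≤ j → j ≤ k → 0 ≤ esymmVec n j (fun i => if i ∈ F then y i else x i)) ∧
        esymmVec n k x ≤ esymmVec n k (fun i => if i ∈ F then y i else x i) := by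
    intro F
    induction F using Finset.induction_on with
    | empty =>
      simp only [Finset.notMem_empty, if_false]
      exact ⟨hx, le_refl _⟩
    | @insert i F hiF ih =>
      obtain ⟨ih1, ih2⟩ := ih
      have hupd : (fun i' => if i' ∈ insert i F then y i' else x i')
          = Function.update (fun i' => if i' ∈ F then y i' else x i') i (y i) := by
        funext i'
        by_cases hii : i' = i
        · subst hii
          rw [Function.update_self, if_pos (Finset.mem_insert_self i' F)]
        · rw [Function.update_of_ne hii]
          simp only [Finset.mem_insert]
          by_cases hiF' : i' ∈ F
          · rw [if_pos (Or.inr hiF'), if_pos hiF']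
          · rw [if_neg (by tauto), if_neg hiF']
      have hci : (fun i' => if i' ∈ F then y i' else x i') i ≤ y i := by
        simp only [if_neg hiF]
        exact hxy i
      obtain ⟨h1, h2⟩ := esymmVec_update_step hk1 hkn _ i (y i) hci ih1
      rw [hupd]
      exact ⟨h1, le_trans ih2 h2⟩
  obtain ⟨-, h⟩ := key Finset.univ
  have : (fun i => if i ∈ Finset.univ then y i else x i) = y := by
    funext i'; simp
  rwa [this] at h

lemma esymmVec_comp_perm (x : Fin n → ℝ) (σ : Equiv.Perm (Fin n)) (j : ℕ) :
    esymmVec n j (x ∘ σ) = esymmVec n j x := by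
  rw [esymmVec_eq_esymm, esymmVec_eq_esymm]
  congr 1
  have h1 : Multiset.map (⇑σ) Finset.univ.val = Finset.univ.val := by
    have := Finset.map_univ_equiv σ
    calc Multiset.map (⇑σ) Finset.univ.val = (Finset.univ.map σ.toEmbedding).val := by
          rw [Finset.map_val]; rfl
      _ = Finset.univ.val := by rw [this]
  calc Multiset.map (x ∘ ⇑σ) Finset.univ.val
      = Multiset.map x (Multiset.map (⇑σ) Finset.univ.val) := by
        rw [Multiset.map_map]
    _ = Multiset.map x Finset.univ.val := by rw [h1]

lemma continuous_esymmVec (n j : ℕ) : Continuous fun x : Fin n → ℝ => esymmVec n j x := by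
  refine continuous_finset_sum _ fun s _ => continuous_finset_prod _ fun i _ => continuous_apply i

lemma esymmVec_ones (n j : ℕ) : esymmVec n j (fun _ => (1:ℝ)) = (n.choose j : ℝ) := by
  unfold esymmVec
  simp only [Finset.prod_const_one, Finset.sum_const, nsmul_eq_mul, mul_one]
  rw [Finset.card_powersetCard]
  simp

/-- Γ_k^+ consists of points with σ_1,…,σ_k all positive. -/
lemma gammaPlus_subset_pos (hk1 : 1 ≤ k) (hkn : k ≤ n) :
    GammaPlus n k ⊆ {x | ∀ j, 1 ≤ j → j ≤ k → 0 < esymmVec n j x} := by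
  set U : Set (Fin n → ℝ) := ⋂ j ∈ Finset.Icc 1 k, (esymmVec n j) ⁻¹' Set.Ioi 0 with hU
  set Cset : Set (Fin n → ℝ) := ⋂ j ∈ Finset.Icc 1 k, (esymmVec n j) ⁻¹' Set.Ici 0 with hC
  have hUmem : ∀ x, x ∈ U ↔ ∀ j, 1 ≤ j → j ≤ k → 0 < esymmVec n j x := by
    intro x
    simp [hU, Set.mem_iInter]
  have hCmem : ∀ x, x ∈ Cset ↔ ∀ j, 1 ≤ j → j ≤ k → 0 ≤ esymmVec n j x := by
    intro x
    simp [hC, Set.mem_iInter]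
  have hUopen : IsOpen U :=
    isOpen_biInter_finset fun j _ => (continuous_esymmVec n j).isOpen_preimage _ isOpen_Ioi
  have hCcl : IsClosed Cset := by
    refine isClosed_biInter fun j _ => ?_
    exact IsClosed.preimage (continuous_esymmVec n j) isClosed_Ici
  have hUC : U ⊆ Cset := by
    intro x hx
    rw [hCmem]
    intro j h1 h2
    exact ((hUmem x).1 hx j h1 h2).le
  have hkey : ∀ x ∈ Cset, 0 < esymmVec n k x → x ∈ U := by
    intro x hx h0
    rw [hUmem]
    have hcard : Multiset.card (Multiset.map x Finset.univ.val) = n := card_msOf x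
    have := esymm_all_pos (s := Multiset.map x Finset.univ.val) hk1 (by omega)
      (by rw [← esymmVec_eq_esymm]; exact h0)
      (fun j h1 h2 => by rw [← esymmVec_eq_esymm]; exact (hCmem x).1 hx j h1 h2)
    intro j h1 h2
    rw [esymmVec_eq_esymm]
    exact this j h1 h2
  have hsub : GammaPlus n k ⊆ U ∪ Csetᶜ := by
    intro x hx
    have hxk : x ∈ {x : Fin n → ℝ | 0 < esymmVec n k x} :=
      connectedComponentIn_subset {x : Fin n → ℝ | 0 < esymmVec n k x} (fun _ => 1) hx
    by_cases hxC : x ∈ Cset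
    · exact Or.inl (hkey x hxC hxk)
    · exact Or.inr hxC
  have hdisj : Disjoint U Csetᶜ := by
    rw [Set.disjoint_compl_right_iff_subset]
    exact hUC
  have hmem1 : (fun _ => (1:ℝ)) ∈ GammaPlus n k := by
    refine mem_connectedComponentIn ?_
    show 0 < esymmVec n k (fun _ => (1:ℝ))
    rw [esymmVec_ones]
    exact_mod_cast Nat.choose_pos hkn
  have hmem1U : (fun _ => (1:ℝ)) ∈ U := by
    rw [hUmem]
    intro j h1 h2
    rw [esymmVec_ones]
    exact_mod_cast Nat.choose_pos (le_trans h2 hkn)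
  have hpre : IsPreconnected (GammaPlus n k) := isPreconnected_connectedComponentIn
  have final : GammaPlus n k ⊆ U :=
    hpre.subset_left_of_subset_union hUopen hCcl.isOpen_compl hdisj hsub
      ⟨(fun _ => (1:ℝ)), hmem1, hmem1U⟩
  intro x hx
  exact (hUmem x).1 (final hx)

end VecLayer

variable {n : ℕ} {M : Matrix (Fin n) (Fin n) ℝ}

/-- eigenvectors of a Hermitian matrix, as plain functions -/
noncomputable def evec (hM : M.IsHermitian) (j : Fin n) : Fin n → ℝ :=
  ⇑(hM.eigenvectorBasis j)

lemma sum_dot {ι : Type*} (S : Finset ι) (f : ι → (Fin n → ℝ)) (y : Fin n → ℝ) :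
    dotProduct (∑ i ∈ S, f i) y = ∑ i ∈ S, dotProduct (f i) y := by
  simp only [dotProduct, Finset.sum_apply, Finset.sum_mul]
  exact Finset.sum_comm

lemma dot_sum {ι : Type*} (S : Finset ι) (y : Fin n → ℝ) (f : ι → (Fin n → ℝ)) :
    dotProduct y (∑ i ∈ S, f i) = ∑ i ∈ S, dotProduct y (f i) := by
  simp only [dotProduct, Finset.sum_apply, Finset.mul_sum]
  exact Finset.sum_comm

lemma evec_dot (hM : M.IsHermitian) (i j : Fin n) :
    dotProduct (evec hM i) (evec hM j) = if i = j then 1 else 0 := by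
  have h := orthonormal_iff_ite.1 hM.eigenvectorBasis.orthonormal i j
  rw [EuclideanSpace.inner_eq_star_dotProduct] at h
  simp at h
  rw [dotProduct_comm] at h
  exact h

lemma evec_mulVec (hM : M.IsHermitian) (j : Fin n) :
    M *ᵥ evec hM j = hM.eigenvalues j • evec hM j :=
  hM.mulVec_eigenvectorBasis j

lemma evec_li (hM : M.IsHermitian) (S : Finset (Fin n)) :
    LinearIndependent ℝ (fun j : ↥S => evec hM ↑j) := by
  rw [linearIndependent_iff']
  intro s g hsum i hi
  have h0 : dotProduct (∑ j ∈ s, g j • evec hM ↑j) (evec hM ↑i) = 0 := by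
    rw [hsum, zero_dotProduct]
  rw [sum_dot] at h0
  simp only [smul_dotProduct, evec_dot, smul_eq_mul, mul_ite, mul_one, mul_zero] at h0
  have hcoe : ∀ j : ↥S, ((j : Fin n) = ↑i) = (j = i) := by
    intro j; simp [Subtype.coe_inj]
  simp only [hcoe] at h0
  rwa [Finset.sum_ite_eq' s i g, if_pos hi] at h0

lemma mulVec_sum_evec (hM : M.IsHermitian) (S : Finset (Fin n)) (c : Fin n → ℝ) :
    M *ᵥ (∑ j ∈ S, c j • evec hM j) = ∑ j ∈ S, (hM.eigenvalues j * c j) • evec hM j := by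
  have : M *ᵥ (∑ j ∈ S, c j • evec hM j) = M.mulVecLin (∑ j ∈ S, c j • evec hM j) := rfl
  rw [this, map_sum]
  refine Finset.sum_congr rfl fun j hj => ?_
  rw [_root_.map_smul, mulVecLin_apply, evec_mulVec, smul_smul, mul_comm]

lemma dot_sum_sum (hM : M.IsHermitian) (S : Finset (Fin n)) (c d : Fin n → ℝ) :
    dotProduct (∑ j ∈ S, c j • evec hM j) (∑ j ∈ S, d j • evec hM j)
      = ∑ j ∈ S, c j * d j := by
  rw [sum_dot]
  refine Finset.sum_congr rfl fun j hj => ?_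
  rw [smul_dotProduct, dot_sum]
  simp only [dotProduct_smul, evec_dot, smul_eq_mul, mul_ite, mul_one, mul_zero]
  rw [Finset.sum_ite_eq S j d, if_pos hj]

lemma exists_rep (hM : M.IsHermitian) (S : Finset (Fin n)) {x : Fin n → ℝ}
    (hx : x ∈ Submodule.span ℝ ((fun j => evec hM j) '' ↑S)) :
    ∃ c : Fin n → ℝ, x = ∑ j ∈ S, c j • evec hM j := by
  rw [Set.image_eq_range] at hx
  obtain ⟨c, hc⟩ := (Submodule.mem_span_range_iff_exists_fun ℝ).1 hx
  refine ⟨fun j => if h : j ∈ S then c ⟨j, Finset.mem_coe.2 h⟩ else 0, ?_⟩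
  rw [← hc]
  rw [Finset.sum_subtype S (fun x => Finset.mem_coe.symm)
    (fun j => (if h : j ∈ S then c ⟨j, Finset.mem_coe.2 h⟩ else 0) • evec hM j)]
  refine Finset.sum_congr rfl fun a _ => ?_
  obtain ⟨a, ha⟩ := a
  rw [dif_pos (Finset.mem_coe.1 ha)]

lemma finrank_span_evec (hM : M.IsHermitian) (S : Finset (Fin n)) :
    finrank ℝ (Submodule.span ℝ ((fun j => evec hM j) '' ↑S)) = S.card := by
  rw [Set.image_eq_range]
  exact (finrank_span_eq_card (evec_li hM S)).trans (Fintype.card_coe S)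

lemma dot_self_pos {x : Fin n → ℝ} (hx : x ≠ 0) : 0 < dotProduct x x := by
  obtain ⟨i, hi⟩ := Function.ne_iff.1 hx
  refine Finset.sum_pos' (fun j _ => mul_self_nonneg (x j)) ⟨i, Finset.mem_univ i, ?_⟩
  exact mul_self_pos.2 hi

/-- Weyl-type monotonicity of sorted eigenvalues under psd perturbation. -/
lemma weyl {A B C : Matrix (Fin n) (Fin n) ℝ} (hA : A.PosSemidef) (hB : B.IsHermitian)
    (hAB : C.IsHermitian) (hCeq : C = A + B) (p : Fin n) :
    (hB.eigenvalues ∘ Tuple.sort hB.eigenvalues) p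
      ≤ (hAB.eigenvalues ∘ Tuple.sort hAB.eigenvalues) p := by
  subst hCeq
  set μ := hB.eigenvalues with hμ
  set ν := hAB.eigenvalues with hν
  set σ := Tuple.sort μ with hσ
  set τ := Tuple.sort ν with hτ
  set SW := Finset.image τ (Finset.Iic p) with hSW
  set SU := Finset.image σ (Finset.Ici p) with hSU
  have hcardW : SW.card = (p : ℕ) + 1 := by
    rw [hSW, Finset.card_image_of_injective _ τ.injective, Fin.card_Iic]
  have hcardU : SU.card = n - (p : ℕ) := by
    rw [hSU, Finset.card_image_of_injective _ σ.injective, Fin.card_Ici]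
  set W := Submodule.span ℝ ((fun j => evec hAB j) '' ↑SW) with hW
  set U := Submodule.span ℝ ((fun j => evec hB j) '' ↑SU) with hU
  have hrW : finrank ℝ W = (p : ℕ) + 1 := by rw [hW, finrank_span_evec, hcardW]
  have hrU : finrank ℝ U = n - (p : ℕ) := by rw [hU, finrank_span_evec, hcardU]
  have htot : finrank ℝ (Fin n → ℝ) = n := by simp
  have hsum := Submodule.finrank_sup_add_finrank_inf_eq W U
  have hle : finrank ℝ ↥(W ⊔ U) ≤ n := by
    have := Submodule.finrank_le (W ⊔ U)
    omega
  have hp : (p : ℕ) < n := p.isLt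
  have hinf : finrank ℝ ↥(W ⊓ U) > 0 := by omega
  have hbot : W ⊓ U ≠ ⊥ := by
    intro h
    rw [h, finrank_bot] at hinf
    omega
  obtain ⟨x, hxmem, hx0⟩ := Submodule.exists_mem_ne_zero_of_ne_bot hbot
  obtain ⟨c, hcx⟩ := exists_rep hAB SW (hxmem.1)
  obtain ⟨d, hdx⟩ := exists_rep hB SU (hxmem.2)
  -- quadratic forms
  have hABx : dotProduct x ((A + B) *ᵥ x) = ∑ j ∈ SW, ν j * (c j)^2 := by
    rw [hcx, mulVec_sum_evec hAB SW c]
    have := dot_sum_sum hAB SW c (fun j => ν j * c j)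
    rw [this]
    refine Finset.sum_congr rfl fun j _ => by ring
  have hBx : dotProduct x (B *ᵥ x) = ∑ j ∈ SU, μ j * (d j)^2 := by
    rw [hdx, mulVec_sum_evec hB SU d]
    have := dot_sum_sum hB SU d (fun j => μ j * d j)
    rw [this]
    refine Finset.sum_congr rfl fun j _ => by ring
  have hxxW : dotProduct x x = ∑ j ∈ SW, (c j)^2 := by
    rw [hcx]
    have := dot_sum_sum hAB SW c c
    rw [this]
    refine Finset.sum_congr rfl fun j _ => by ring
  have hxxU : dotProduct x x = ∑ j ∈ SU, (d j)^2 := by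
    rw [hdx]
    have := dot_sum_sum hB SU d d
    rw [this]
    refine Finset.sum_congr rfl fun j _ => by ring
  -- eigenvalue bounds on the spans
  have hνbound : ∀ j ∈ SW, ν j ≤ (ν ∘ τ) p := by
    intro j hj
    obtain ⟨q, hq, rfl⟩ := Finset.mem_image.1 hj
    exact Tuple.monotone_sort ν (Finset.mem_Iic.1 hq)
  have hμbound : ∀ j ∈ SU, (μ ∘ σ) p ≤ μ j := by
    intro j hj
    obtain ⟨q, hq, rfl⟩ := Finset.mem_image.1 hj
    exact Tuple.monotone_sort μ (Finset.mem_Ici.1 hq)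
  have hup : dotProduct x ((A + B) *ᵥ x) ≤ (ν ∘ τ) p * dotProduct x x := by
    rw [hABx, hxxW, Finset.mul_sum]
    refine Finset.sum_le_sum fun j hj => ?_
    have h1 := hνbound j hj
    nlinarith [sq_nonneg (c j)]
  have hlow : (μ ∘ σ) p * dotProduct x x ≤ dotProduct x (B *ᵥ x) := by
    rw [hBx, hxxU, Finset.mul_sum]
    refine Finset.sum_le_sum fun j hj => ?_
    have h1 := hμbound j hj
    nlinarith [sq_nonneg (d j)]
  have hposA : 0 ≤ dotProduct x (A *ᵥ x) := by
    have := hA.dotProduct_mulVec_nonneg x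
    rwa [star_trivial] at this
  have hsplit : dotProduct x ((A + B) *ᵥ x)
      = dotProduct x (A *ᵥ x) + dotProduct x (B *ᵥ x) := by
    rw [add_mulVec, dotProduct_add]
  have hxx : 0 < dotProduct x x := dot_self_pos hx0
  have : (μ ∘ σ) p * dotProduct x x ≤ (ν ∘ τ) p * dotProduct x x := by linarith
  exact le_of_mul_le_mul_right (by linarith [this]) hxx


end SigmaAux

section FinalProof
open SigmaAux

lemma sigmaM_eq {n k : ℕ} {B : Matrix (Fin n) (Fin n) ℝ} (hBh : B.IsHermitian) :
    sigmaM n k B = esymmVec n k hBh.eigenvalues := by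
  rw [sigmaM, dif_pos hBh]

lemma sigma_le_of_psd {n k : ℕ} (hk1 : 1 ≤ k) (hkn : k ≤ n)
    {A B C : Matrix (Fin n) (Fin n) ℝ} (hA : A.PosSemidef) (hBh : B.IsHermitian)
    (hCh : C.IsHermitian) (hCeq : C = A + B) (hBmem : hBh.eigenvalues ∈ GammaPlus n k) :
    sigmaM n k B ≤ sigmaM n k C := by
  set x := hBh.eigenvalues ∘ Tuple.sort hBh.eigenvalues with hx
  set y := hCh.eigenvalues ∘ Tuple.sort hCh.eigenvalues with hy
  have hW : ∀ p, x p ≤ y p := weyl hA hBh hCh hCeq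
  have hBpos : ∀ j, 1 ≤ j → j ≤ k → 0 < esymmVec n j hBh.eigenvalues :=
    gammaPlus_subset_pos hk1 hkn hBmem
  have hxnn : ∀ j, 1 ≤ j → j ≤ k → 0 ≤ esymmVec n j x := by
    intro j h1 h2
    rw [hx, esymmVec_comp_perm]
    exact (hBpos j h1 h2).le
  have hmono := esymmVec_mono hk1 hkn hxnn hW
  rw [sigmaM_eq hBh, sigmaM_eq hCh]
  calc esymmVec n k hBh.eigenvalues = esymmVec n k x := (esymmVec_comp_perm _ _ k).symm
    _ ≤ esymmVec n k y := hmono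
    _ = esymmVec n k hCh.eigenvalues := esymmVec_comp_perm _ _ k

end FinalProof


/-- Monotonicity of `σ_k`: if `B ∈ Γ_k^+` and `A + B ∈ Γ_k^+`, then
`σ_k(A + B) ≥ σ_k(B)` when `A` is positive semi-definite, and
`σ_k(A + B) ≤ σ_k(B)` when `A` is negative semi-definite. -/
theorem sigma_monotone (n k : ℕ) (hk1 : 1 ≤ k) (hkn : k ≤ n)
    (A B : Matrix (Fin n) (Fin n) ℝ) (hAh : A.IsHermitian)
    (hB : InGammaPlus n k B) (hAB : InGammaPlus n k (A + B)) :
    (A.PosSemidef → sigmaM n k B ≤ sigmaM n k (A + B)) ∧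
      ((-A).PosSemidef → sigmaM n k (A + B) ≤ sigmaM n k B) := by
  obtain ⟨hBh, hBmem⟩ := hB
  obtain ⟨hABh, hABmem⟩ := hAB
  constructor
  · intro hApsd
    exact sigma_le_of_psd hk1 hkn hApsd hBh hABh rfl hBmem
  · intro hnegpsd
    exact sigma_le_of_psd hk1 hkn hnegpsd hABh hBh (by rw [neg_add_cancel_left]) hABmem
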